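/- Let φ : M → N and φ' : M → N' be topological embeddings with open images into proper metric spaces. If p ∈ frontier(φ(M)) and B' ⊆ frontier(φ'(M)) is equivalent to the singleton boundary set {p} (each covers the other), then B' is compact. -/

import Mathlib

open Set Topology Filter Metric

/-- `B` (a boundary set of the envelopment `φ`) covers `B'` (a boundary set of the
envelopment `φ'`): for every open neighbourhood `U` of `B` there is an open
neighbourhood `U'` of `B'` with `φ(φ'⁻¹(U' ∩ φ'(M))) ⊆ U`. -/
def Covers {M N N' : Type*} [TopologicalSpace M] [TopologicalSpace N] [TopologicalSpace N']
    (φ : M → N) (φ' : M → N') (B : Set N) (B' : Set N') : Prop :=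
  ∀ U : Set N, IsOpen U → B ⊆ U →
    ∃ U' : Set N', IsOpen U' ∧ B' ⊆ U' ∧ φ '' (φ' ⁻¹' (U' ∩ range φ')) ⊆ U

theorem isCompact_of_equiv_singleton
    {M N N' : Type*} [TopologicalSpace M] [MetricSpace N] [ProperSpace N]
    [MetricSpace N'] [ProperSpace N']
    {φ : M → N} {φ' : M → N'}
    (hφ : Topology.IsEmbedding φ) (hφo : IsOpen (range φ))
    (hφ' : Topology.IsEmbedding φ') (hφ'o : IsOpen (range φ'))
    {p : N} (hp : p ∈ frontier (range φ))
    {B' : Set N'} (hB' : B' ⊆ frontier (range φ'))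
    (h1 : Covers φ φ' {p} B') (h2 : Covers φ' φ B' {p}) :
    IsCompact B' := by
  -- points of `B'` are not in `range φ'`
  have hrange' : ∀ q ∈ B', q ∉ range φ' := by
    intro q hq hr
    have : q ∈ range φ' ∩ frontier (range φ') := ⟨hr, hB' hq⟩
    rw [hφ'o.inter_frontier_eq] at this
    exact this
  refine IsSeqCompact.isCompact ?_
  intro b hb
  -- construct approximating points `x n` in `M`
  have hx : ∀ n : ℕ, ∃ x : M,
      dist (φ' x) (b n) < 1 / (n + 1) ∧ dist (φ x) p < 1 / (n + 1) := by
    intro n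
    have hpos : (0 : ℝ) < 1 / (n + 1) := by positivity
    obtain ⟨V, hVo, hBV, hV⟩ := h1 (ball p (1 / (n + 1))) isOpen_ball
      (singleton_subset_iff.2 (mem_ball_self hpos))
    have hcl : b n ∈ closure (range φ') := frontier_subset_closure (hB' (hb n))
    have hne : ((V ∩ ball (b n) (1 / (n + 1))) ∩ range φ').Nonempty :=
      _root_.mem_closure_iff.1 hcl _ (hVo.inter isOpen_ball) ⟨hBV (hb n), mem_ball_self hpos⟩
    obtain ⟨z, ⟨hzV, hzb⟩, x, rfl⟩ := hne
    refine ⟨x, by simpa [dist_comm] using hzb, ?_⟩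
    have : φ x ∈ ball p (1 / (n + 1)) := hV ⟨x, ⟨hzV, ⟨x, rfl⟩⟩, rfl⟩
    simpa [mem_ball] using this
  choose x hxb hxp using hx
  set y : ℕ → N' := fun n => φ' (x n) with hy
  have hone : Tendsto (fun n : ℕ => 1 / ((n : ℝ) + 1)) atTop (𝓝 0) :=
    tendsto_one_div_add_atTop_nhds_zero_nat
  have hlim : Tendsto (fun n => φ (x n)) atTop (𝓝 p) := by
    rw [tendsto_iff_dist_tendsto_zero]
    exact squeeze_zero (fun n => dist_nonneg) (fun n => (hxp n).le) hone
  -- key consequence of `h2`: `y` eventually avoids any closed set disjoint from `B'`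
  have K : ∀ C : Set N', IsClosed C → Disjoint B' C → ∀ᶠ n in atTop, y n ∉ C := by
    intro C hC hdisj
    obtain ⟨U, hUo, hpU, hU⟩ := h2 Cᶜ hC.isOpen_compl
      (subset_compl_iff_disjoint_right.2 hdisj)
    have hev : ∀ᶠ n in atTop, φ (x n) ∈ U := hlim (hUo.mem_nhds (hpU rfl))
    filter_upwards [hev] with n hn
    exact hU ⟨x n, ⟨hn, ⟨x n, rfl⟩⟩, rfl⟩
  -- some point of `B'` is a cluster point of `y`
  have hq : ∃ q ∈ B', MapClusterPt q atTop y := by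
    by_contra hcon
    push_neg at hcon
    have hdisj : Disjoint B' (closure (range y)) := by
      rw [Set.disjoint_left]
      intro q hqB hqcl
      refine hcon q hqB ?_
      rw [mapClusterPt_iff_frequently]
      intro s hs
      by_contra hfreq
      rw [not_frequently] at hfreq
      obtain ⟨Nn, hNn⟩ := eventually_atTop.1 hfreq
      obtain ⟨ε, hε, hball⟩ := Metric.mem_nhds_iff.1 hs
      have hmem : q ∈ closure (y '' (Iio Nn)) := by
        rw [_root_.mem_closure_iff] at hqcl ⊢
        intro o ho hqo
        obtain ⟨z, ⟨hzo, hzb⟩, n, rfl⟩ :=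
          hqcl (o ∩ ball q ε) (ho.inter isOpen_ball) ⟨hqo, mem_ball_self hε⟩
        have hn : n < Nn := by
          by_contra hge
          exact hNn n (le_of_not_gt hge) (hball hzb)
        exact ⟨y n, hzo, ⟨n, hn, rfl⟩⟩
      have hfin : (y '' (Iio Nn)).Finite := (Set.finite_Iio Nn).image y
      rw [hfin.isClosed.closure_eq] at hmem
      obtain ⟨n, _, rfl⟩ := hmem
      exact hrange' _ hqB ⟨x n, rfl⟩
    have hev := K _ isClosed_closure hdisj
    obtain ⟨n, hn⟩ := hev.exists
    exact hn (subset_closure ⟨n, rfl⟩)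
  obtain ⟨q, hqB, hqcl⟩ := hq
  -- `q` is also a cluster point of `b`
  have hclb : MapClusterPt q atTop b := by
    rw [nhds_basis_ball.mapClusterPt_iff_frequently]
    intro ε hε
    have hfr : ∃ᶠ n in atTop, y n ∈ ball q (ε / 2) :=
      (nhds_basis_ball.mapClusterPt_iff_frequently.1 hqcl) (ε / 2) (by positivity)
    have hevs : ∀ᶠ n in atTop, dist (y n) (b n) < ε / 2 := by
      have := hone.eventually (gt_mem_nhds (by positivity : (0 : ℝ) < ε / 2))
      filter_upwards [this] with n hn
      exact lt_trans (hxb n) hn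
    refine (hfr.and_eventually hevs).mono ?_
    rintro n ⟨h₁, h₂⟩
    have : dist (b n) q ≤ dist (b n) (y n) + dist (y n) q := dist_triangle _ _ _
    rw [mem_ball] at h₁ ⊢
    rw [dist_comm] at h₂
    linarith
  obtain ⟨g, hg, hgt⟩ := TopologicalSpace.FirstCountableTopology.tendsto_subseq hclb
  exact ⟨q, hqB, g, hg, hgt⟩
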